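/- In the monitoring game, assume p_a = p_b = p with 1/3 < p < 1/2 (so p_c = 1 − 2p) and (1 − 2p)/(1 − p) < ν* < p/(1 − p), and let ζ satisfy p < ζ < 1 − p. Consider the distribution λ over two-class partitions of {a,b,c} given by λ({{a,c},{b}}) = μ* and λ({{b,c},{a}}) = 1 − μ*; the employer's strategy for each partition in the support: control every type in the class containing a and not control every type in the class containing b; and the worker: type c plays e = 0 with probability ζ (so e₁(c) = 1 − ζ). Then this profile is a locally clustered distributional analogy-based expectation equilibrium: the aggregate control probability faced by type c equals μ* (so any ζ is a worker best response), the employer's actions are best responses to the consistent expectations β₁ for each partition in the support, and each partition in the support of λ is locally clustered with respect to the worker's behavior: (e₁(ω) − β₁(α))² ≤ (e₁(ω) − β₁(α'))² for all classes α, α' of that partition and all ω ∈ α. -/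

import Mathlib

/-- The three worker types of the monitoring game. -/
inductive Typ : Type
  | a | b | c
  deriving DecidableEq

instance : Fintype Typ where
  elems := {Typ.a, Typ.b, Typ.c}
  complete := by intro x; cases x <;> simp

/-- Probabilities of the worker types. -/
noncomputable def pmap (pa pb pc : ℝ) : Typ → ℝ
  | .a => pa
  | .b => pb
  | .c => pc

/-- Probability of high effort of each worker type, when type `c` chooses low effort
with probability `ζ`. -/
noncomputable def emap (ζ : ℝ) : Typ → ℝ
  | .a => 0
  | .b => 1
  | .c => 1 - ζ

/-- The analogy class (fiber) of type `ω` under the two-class partition encoded by `g`. -/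
def cls (g : Typ → Bool) (ω : Typ) : Finset Typ :=
  Finset.univ.filter fun ω' => g ω' = g ω

/-- The employer's analogy-based expectation of high effort on the class `α`. -/
noncomputable def beta1 (p e : Typ → ℝ) (α : Finset Typ) : ℝ :=
  (∑ ω ∈ α, p ω * e ω) / ∑ ω ∈ α, p ω

/-- The partition `{{a,c},{b}}`: `a, c ↦ true`, `b ↦ false`. -/
def gac : Typ → Bool
  | .b => false
  | _ => true

/-- The partition `{{b,c},{a}}`: `b, c ↦ true`, `a ↦ false`. -/
def gbc : Typ → Bool
  | .a => false
  | _ => true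

/-- Employer control probabilities under partition `{{a,c},{b}}`:
control the class containing `a`, do not control the class containing `b`. -/
noncomputable def mac : Typ → ℝ
  | .b => 0
  | _ => 1

/-- Employer control probabilities under partition `{{b,c},{a}}`:
control the class containing `a`, do not control the class containing `b`. -/
noncomputable def mbc : Typ → ℝ
  | .a => 1
  | _ => 0

/-- The partition `g` is locally clustered with respect to worker behavior `e`. -/
def LocallyClustered (p e : Typ → ℝ) (g : Typ → Bool) : Prop :=
  ∀ ω ω' : Typ,
    (e ω - beta1 p e (cls g ω)) ^ 2 ≤ (e ω - beta1 p e (cls g ω')) ^ 2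

set_option maxHeartbeats 1000000 in
/-- **Locally clustered distributional ABEE of the monitoring game** (Proposition 6),
for `p_a = p_b = p` with `1/3 < p < 1/2` (so `p_c = 1 - 2p`),
`(1-2p)/(1-p) < ν* < p/(1-p)`, and any `ζ` with `p < ζ < 1 - p`.

With `λ({{a,c},{b}}) = μ*` and `λ({{b,c},{a}}) = 1 - μ*`, the employer controlling the
class containing `a` and not the class containing `b`, and the `c` worker choosing
`e = 0` with probability `ζ`: the aggregate control probability faced by type `c`
equals `μ*` (so any `ζ` is a worker best response), for each partition in the support
the employer's actions are best responses to the consistent expectations `β₁`, and both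
partitions in the support are locally clustered with respect to the worker's behavior. -/
theorem monitoring_locally_clustered_distributional_ABEE
    (p : ℝ) (hp1 : 1 / 3 < p) (hp2 : p < 1 / 2)
    (μs νs : ℝ) (hμ0 : 0 < μs) (hμ1 : μs < 1)
    (hν_lo : (1 - 2 * p) / (1 - p) < νs) (hν_hi : νs < p / (1 - p))
    (ζ : ℝ) (hζlo : p < ζ) (hζhi : ζ < 1 - p) :
    -- aggregate control probability faced by type c equals μ*
    (μs * mac Typ.c + (1 - μs) * mbc Typ.c = μs) ∧
    -- employer best responses under partition {{a,c},{b}}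
    (∀ ω, (beta1 (pmap p p (1 - 2 * p)) (emap ζ) (cls gac ω) < νs ∧ mac ω = 1) ∨
          (νs < beta1 (pmap p p (1 - 2 * p)) (emap ζ) (cls gac ω) ∧ mac ω = 0)) ∧
    -- employer best responses under partition {{b,c},{a}}
    (∀ ω, (beta1 (pmap p p (1 - 2 * p)) (emap ζ) (cls gbc ω) < νs ∧ mbc ω = 1) ∨
          (νs < beta1 (pmap p p (1 - 2 * p)) (emap ζ) (cls gbc ω) ∧ mbc ω = 0)) ∧
    -- both partitions in the support of λ are locally clustered
    LocallyClustered (pmap p p (1 - 2 * p)) (emap ζ) gac ∧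
    LocallyClustered (pmap p p (1 - 2 * p)) (emap ζ) gbc := by
  
  have hp0 : (0:ℝ) < p := by linarith
  have h1p : (0:ℝ) < 1 - p := by linarith
  have h12p : (0:ℝ) < 1 - 2*p := by linarith
  have hζ0 : (0:ℝ) < ζ := lt_trans hp0 hζlo
  have hζ1 : ζ < 1 := by linarith
  have e1 : ∀ (q e : Typ → ℝ), beta1 q e {Typ.a, Typ.c} =
      (q Typ.a * e Typ.a + q Typ.c * e Typ.c) / (q Typ.a + q Typ.c) := by
    intro q e
    rw [beta1, Finset.sum_pair (by decide), Finset.sum_pair (by decide)]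
  have e2 : ∀ (q e : Typ → ℝ), beta1 q e {Typ.b, Typ.c} =
      (q Typ.b * e Typ.b + q Typ.c * e Typ.c) / (q Typ.b + q Typ.c) := by
    intro q e
    rw [beta1, Finset.sum_pair (by decide), Finset.sum_pair (by decide)]
  have e3 : ∀ (q e : Typ → ℝ) t, beta1 q e {t} = q t * e t / q t := by
    intro q e t
    rw [beta1, Finset.sum_singleton, Finset.sum_singleton]
  have Bac : beta1 (pmap p p (1 - 2 * p)) (emap ζ) {Typ.a, Typ.c} = (1-2*p)*(1-ζ)/(1-p) := by
    rw [e1]; simp only [pmap, emap]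
    rw [show p * 0 + (1-2*p)*(1-ζ) = (1-2*p)*(1-ζ) by ring,
        show p + (1-2*p) = 1 - p by ring]
  have Bb : beta1 (pmap p p (1 - 2 * p)) (emap ζ) {Typ.b} = 1 := by
    rw [e3]; simp only [pmap, emap]; field_simp
  have Ba : beta1 (pmap p p (1 - 2 * p)) (emap ζ) {Typ.a} = 0 := by
    rw [e3]; simp only [pmap, emap]; ring
  have Bbc : beta1 (pmap p p (1 - 2 * p)) (emap ζ) {Typ.b, Typ.c} = (p + (1-2*p)*(1-ζ))/(1-p) := by
    rw [e2]; simp only [pmap, emap]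
    rw [show p * 1 + (1-2*p)*(1-ζ) = p + (1-2*p)*(1-ζ) by ring,
        show p + (1-2*p) = 1 - p by ring]
  have ca : cls gac Typ.a = {Typ.a, Typ.c} := by decide
  have cb : cls gac Typ.b = {Typ.b} := by decide
  have cc : cls gac Typ.c = {Typ.a, Typ.c} := by decide
  have da : cls gbc Typ.a = {Typ.a} := by decide
  have db : cls gbc Typ.b = {Typ.b, Typ.c} := by decide
  have dc : cls gbc Typ.c = {Typ.b, Typ.c} := by decide
  have hνlo' : 1 - 2 * p < νs * (1 - p) := by
    have := (div_lt_iff₀ h1p).mp hν_lo; linarith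
  have hνhi' : νs * (1 - p) < p := by
    have := (lt_div_iff₀ h1p).mp hν_hi; linarith
  have hBac_lt : (1-2*p)*(1-ζ)/(1-p) < νs := by
    rw [div_lt_iff₀ h1p]; nlinarith
  have hνs1 : νs < 1 := by nlinarith
  have hν0 : 0 < νs := by nlinarith
  have hBbc_gt : νs < (p + (1-2*p)*(1-ζ))/(1-p) := by
    rw [lt_div_iff₀ h1p]; nlinarith
  -- local-clustering inequalities
  have PA : (0 - (1-2*p)*(1-ζ)/(1-p))^2 ≤ ((0:ℝ) - 1)^2 := by
    rw [zero_sub, neg_sq, div_pow, div_le_iff₀ (by positivity)]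
    have hX0 : (0:ℝ) < (1-2*p)*(1-ζ) := mul_pos h12p (by linarith)
    have hX : (1-2*p)*(1-ζ) < 1-p := by nlinarith
    nlinarith [mul_pos (sub_pos.mpr hX) (by positivity : (0:ℝ) < (1-p) + (1-2*p)*(1-ζ))]
  have PC : ((1-ζ) - (1-2*p)*(1-ζ)/(1-p))^2 ≤ ((1-ζ) - 1)^2 := by
    have hrw : (1-ζ) - (1-2*p)*(1-ζ)/(1-p) = (1-ζ)*p/(1-p) := by
      field_simp; ring
    rw [hrw, div_pow, div_le_iff₀ (by positivity)]
    have h1 : (0:ℝ) < (1-ζ)*p := mul_pos (by linarith) hp0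
    have h2 : (1-ζ)*p < ζ*(1-p) := by nlinarith
    nlinarith [mul_pos (sub_pos.mpr h2) (by nlinarith : (0:ℝ) < ζ*(1-p) + (1-ζ)*p)]
  have QB : (1 - (p + (1-2*p)*(1-ζ))/(1-p))^2 ≤ ((1:ℝ) - 0)^2 := by
    have hrw : 1 - (p + (1-2*p)*(1-ζ))/(1-p) = (1-2*p)*ζ/(1-p) := by
      field_simp; ring
    rw [hrw, div_pow, div_le_iff₀ (by positivity)]
    have hY0 : (0:ℝ) < (1-2*p)*ζ := mul_pos h12p hζ0
    have hY : (1-2*p)*ζ < 1-p := by nlinarith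
    nlinarith [mul_pos (sub_pos.mpr hY) (by positivity : (0:ℝ) < (1-p) + (1-2*p)*ζ)]
  have QC : ((1-ζ) - (p + (1-2*p)*(1-ζ))/(1-p))^2 ≤ ((1-ζ) - 0)^2 := by
    have hrw : (1-ζ) - (p + (1-2*p)*(1-ζ))/(1-p) = -(p*ζ/(1-p)) := by
      field_simp; ring
    rw [hrw, neg_sq, div_pow, div_le_iff₀ (by positivity)]
    have h1 : (0:ℝ) < p*ζ := mul_pos hp0 hζ0
    have h2 : p*ζ < (1-ζ)*(1-p) := by nlinarith
    nlinarith [mul_pos (sub_pos.mpr h2) (by nlinarith : (0:ℝ) < (1-ζ)*(1-p) + p*ζ)]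
  refine ⟨by simp [mac, mbc], ?_, ?_, ?_, ?_⟩
  · intro ω
    rcases ω with _ | _ | _
    · exact Or.inl ⟨by rw [ca, Bac]; exact hBac_lt, rfl⟩
    · exact Or.inr ⟨by rw [cb, Bb]; exact hνs1, rfl⟩
    · exact Or.inl ⟨by rw [cc, Bac]; exact hBac_lt, rfl⟩
  · intro ω
    rcases ω with _ | _ | _
    · exact Or.inl ⟨by rw [da, Ba]; exact hν0, rfl⟩
    · exact Or.inr ⟨by rw [db, Bbc]; exact hBbc_gt, rfl⟩
    · exact Or.inr ⟨by rw [dc, Bbc]; exact hBbc_gt, rfl⟩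
  · intro ω ω'
    rcases ω with _ | _ | _ <;> rcases ω' with _ | _ | _ <;>
      simp only [emap, ca, cb, cc, Bac, Bb] <;>
      first
        | exact le_refl _
        | exact PA
        | exact PC
        | (norm_num; positivity)
  · intro ω ω'
    rcases ω with _ | _ | _ <;> rcases ω' with _ | _ | _ <;>
      simp only [emap, da, db, dc, Ba, Bbc] <;>
      first
        | exact le_refl _
        | exact QB
        | exact QC
        | (norm_num; positivity)
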